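/- Rajchman's lemma: let (X, 𝓑, μ) be a probability space and (f_n) a sequence in L²(X, μ) with ‖f_n‖₂ ≤ C for all n and ⟨f_n, f_m⟩ = 0 for n ≠ m. Then (1/n)∑_{k=1}^{n} f_k → 0 almost everywhere. -/

import Mathlib

open MeasureTheory Filter ENNReal NNReal

section aux
variable {X : Type*} [MeasurableSpace X] {μ : Measure X}

lemma raj_mul_integrable {f g : X → ℝ} (hf : MemLp f 2 μ) (hg : MemLp g 2 μ) :
    Integrable (fun x => f x * g x) μ :=
  memLp_one_iff_integrable.mp
    (hg.smul hf (p := 2) (q := 2) (r := 1)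
      (hpqr := ⟨by simpa using ENNReal.inv_two_add_inv_two⟩))

lemma raj_integral_sq_sum {f : ℕ → X → ℝ} (hmem : ∀ n, MemLp (f n) 2 μ)
    (horth : ∀ n m, n ≠ m → ∫ x, f n x * f m x ∂μ = 0) (s : Finset ℕ) :
    ∫ x, (∑ k ∈ s, f k x)^2 ∂μ = ∑ k ∈ s, ∫ x, (f k x)^2 ∂μ := by
  have h : ∀ x, (∑ k ∈ s, f k x)^2 = ∑ k ∈ s, ∑ j ∈ s, f k x * f j x := by
    intro x; rw [sq, Finset.sum_mul_sum]
  simp_rw [h]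
  rw [integral_finset_sum _ (fun k _ =>
    integrable_finset_sum _ fun j _ => raj_mul_integrable (hmem k) (hmem j))]
  refine Finset.sum_congr rfl fun k hk => ?_
  rw [integral_finset_sum _ (fun j _ => raj_mul_integrable (hmem k) (hmem j)),
    Finset.sum_eq_single_of_mem k hk (fun j _ hj => horth k j (fun h => hj h.symm))]
  simp [sq]

lemma raj_sq_int_le {f : X → ℝ} {C : ℝ} (hmem : MemLp f 2 μ)
    (hbd : eLpNorm f 2 μ ≤ ENNReal.ofReal C) :
    ∫ x, (f x)^2 ∂μ ≤ (max C 0)^2 := by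
  set B := max C 0 with hB
  have hB0 : 0 ≤ B := le_max_right _ _
  have hbd' : eLpNorm f 2 μ ≤ ENNReal.ofReal B :=
    hbd.trans (ENNReal.ofReal_le_ofReal (le_max_left _ _))
  have h2 : eLpNorm f 2 μ = (∫⁻ x, (‖f x‖₊ : ℝ≥0∞) ^ (2:ℝ) ∂μ) ^ (1/(2:ℝ)) := by
    rw [eLpNorm_eq_lintegral_rpow_enorm_toReal (by norm_num) (by norm_num)]
    norm_num
    rfl
  have h3 : ∫⁻ x, (‖f x‖₊ : ℝ≥0∞) ^ (2:ℝ) ∂μ ≤ (ENNReal.ofReal B) ^ (2:ℝ) := by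
    have := ENNReal.rpow_le_rpow (h2 ▸ hbd') (z := 2) (by norm_num)
    rwa [← ENNReal.rpow_mul, one_div,
      inv_mul_cancel₀ (by norm_num : (2:ℝ) ≠ 0), ENNReal.rpow_one] at this
  have h4 : ∫ x, (f x)^2 ∂μ = (∫⁻ x, ENNReal.ofReal ((f x)^2) ∂μ).toReal := by
    rw [integral_eq_lintegral_of_nonneg_ae (Eventually.of_forall fun x => sq_nonneg _)
      ((hmem.aestronglyMeasurable.mul hmem.aestronglyMeasurable).congr
        (Eventually.of_forall fun x => (sq (f x)).symm))]
  have h5 : ∀ x, ENNReal.ofReal ((f x)^2) = (‖f x‖₊ : ℝ≥0∞) ^ (2:ℝ) := by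
    intro x
    rw [show (2:ℝ) = ((2:ℕ):ℝ) by norm_num, ENNReal.rpow_natCast,
      ← enorm_eq_nnnorm, ← ofReal_norm, ← ENNReal.ofReal_pow (norm_nonneg _)]
    congr 1
    rw [Real.norm_eq_abs, sq_abs]
  rw [h4]
  simp_rw [h5]
  calc (∫⁻ x, (‖f x‖₊ : ℝ≥0∞) ^ (2:ℝ) ∂μ).toReal
      ≤ ((ENNReal.ofReal B) ^ (2:ℝ)).toReal :=
        ENNReal.toReal_mono
          (ENNReal.rpow_ne_top_of_nonneg (by norm_num) ENNReal.ofReal_ne_top) h3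
    _ = B ^ 2 := by
        rw [show (2:ℝ) = ((2:ℕ):ℝ) by norm_num, ENNReal.rpow_natCast,
          ENNReal.toReal_pow, ENNReal.toReal_ofReal hB0]

lemma raj_ae_tendsto_zero {g : ℕ → X → ℝ} (hnn : ∀ n x, 0 ≤ g n x)
    (hmeas : ∀ n, AEMeasurable (g n) μ)
    (hsum : ∑' n, ∫⁻ x, ENNReal.ofReal (g n x) ∂μ ≠ ∞) :
    ∀ᵐ x ∂μ, Tendsto (fun n => g n x) atTop (nhds 0) := by
  have hm : ∀ n, AEMeasurable (fun x => ENNReal.ofReal (g n x)) μ :=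
    fun n => (hmeas n).ennreal_ofReal
  have h1 : ∫⁻ x, ∑' n, ENNReal.ofReal (g n x) ∂μ ≠ ∞ := by
    rw [lintegral_tsum hm]; exact hsum
  have h2 : ∀ᵐ x ∂μ, ∑' n, ENNReal.ofReal (g n x) < ∞ :=
    ae_lt_top' (AEMeasurable.ennreal_tsum hm) h1
  filter_upwards [h2] with x hx
  have h3 : Tendsto (fun n => ENNReal.ofReal (g n x)) atTop (nhds 0) :=
    ENNReal.tendsto_atTop_zero_of_tsum_ne_top hx.ne
  have h4 := (ENNReal.tendsto_toReal (by simp)).comp h3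
  have : (fun n => (ENNReal.ofReal (g n x)).toReal) = fun n => g n x := by
    funext n; exact ENNReal.toReal_ofReal (hnn n x)
  simp only [Function.comp_def] at h4
  rw [this] at h4
  simpa using h4


lemma raj_tsum_ne_top {g : ℕ → X → ℝ} {K : ℝ} (hK : 0 ≤ K)
    (h : ∀ n : ℕ, ∫⁻ x, ENNReal.ofReal (g n x) ∂μ ≤ ENNReal.ofReal (K * (1/(n:ℝ))^2)) :
    ∑' n, ∫⁻ x, ENNReal.ofReal (g n x) ∂μ ≠ ⊤ := by
  have hs0 : Summable (fun n : ℕ => 1/(n:ℝ)^2) :=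
    Real.summable_one_div_nat_pow.mpr one_lt_two
  have hs : Summable (fun n : ℕ => K * (1/(n:ℝ))^2) :=
    (hs0.mul_left K).congr fun n => by ring
  have h1 := ENNReal.ofReal_tsum_of_nonneg (fun n => by positivity) hs
  exact ne_top_of_le_ne_top (h1 ▸ ENNReal.ofReal_ne_top) (ENNReal.tsum_le_tsum h)

end aux

theorem stmt18 {X : Type*} [MeasurableSpace X] (μ : Measure X) [IsProbabilityMeasure μ]
    (f : ℕ → X → ℝ) (C : ℝ)
    (hmem : ∀ n, MemLp (f n) 2 μ)
    (hbd : ∀ n, eLpNorm (f n) 2 μ ≤ ENNReal.ofReal C)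
    (horth : ∀ n m, n ≠ m → ∫ x, f n x * f m x ∂μ = 0) :
    ∀ᵐ x ∂μ, Tendsto (fun n : ℕ => (1 / (n : ℝ)) * ∑ k ∈ Finset.Icc 1 n, f k x)
      atTop (nhds 0) := by
  set B := max C 0 with hB
  have hB0 : 0 ≤ B := le_max_right _ _
  set S : ℕ → X → ℝ := fun n x => ∑ k ∈ Finset.Icc 1 n, f k x with hS
  have hSmem : ∀ s : Finset ℕ, MemLp (fun x => ∑ k ∈ s, f k x) 2 μ :=
    fun s => memLp_finset_sum s fun k _ => hmem k
  have hSmem' : ∀ n : ℕ, MemLp (S n) 2 μ := fun n => hSmem (Finset.Icc 1 n)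
  have hint : ∀ s : Finset ℕ, ∫ x, (∑ k ∈ s, f k x)^2 ∂μ ≤ (s.card : ℝ) * B^2 := by
    intro s
    rw [raj_integral_sq_sum hmem horth s]
    calc ∑ k ∈ s, ∫ x, (f k x)^2 ∂μ ≤ ∑ k ∈ s, B^2 :=
          Finset.sum_le_sum fun k _ => raj_sq_int_le (hmem k) (hbd k)
      _ = (s.card : ℝ) * B^2 := by rw [Finset.sum_const, nsmul_eq_mul]
  have hsqint : ∀ N : ℕ, Integrable (fun x => (S N x)^2) μ := fun N => by
    simpa [sq] using raj_mul_integrable (hSmem' N) (hSmem' N)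
  have hdiffmem : ∀ a b : ℕ, MemLp (fun x => S b x - S a x) 2 μ :=
    fun a b => (hSmem' b).sub (hSmem' a)
  have hdiffsq : ∀ a b : ℕ, Integrable (fun x => (S b x - S a x)^2) μ := fun a b => by
    simpa [sq] using raj_mul_integrable (hdiffmem a b) (hdiffmem a b)
  have hIoc : ∀ n : ℕ, Finset.Icc 1 n = Finset.Ioc 0 n := fun n => Finset.Icc_add_one_left_eq_Ioc 0 n
  have hdiffeq : ∀ a b : ℕ, a ≤ b → ∀ x, S b x - S a x = ∑ k ∈ Finset.Ioc a b, f k x := by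
    intro a b hab x
    have h0 : ∀ n, S n x = ∑ k ∈ Finset.Ioc 0 n, f k x := by
      intro n; rw [hS]; simp only []; rw [hIoc]
    rw [h0, h0]
    have := Finset.sum_Ioc_consecutive (fun k => f k x) (Nat.zero_le a) hab
    linarith
  have hdiffbd : ∀ a b : ℕ, a ≤ b →
      ∫ x, (S b x - S a x)^2 ∂μ ≤ ((b - a : ℕ) : ℝ) * B^2 := by
    intro a b hab
    simp_rw [hdiffeq a b hab]
    simpa [Nat.card_Ioc] using hint (Finset.Ioc a b)
  -- first sequence
  have hg1int : ∀ n : ℕ, Integrable (fun x => (S (n^2) x / ((n:ℝ)^2))^2) μ := by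
    intro n
    exact ((hsqint (n^2)).div_const (((n:ℝ)^2)^2)).congr
      (Eventually.of_forall fun x => (div_pow _ _ _).symm)
  have hb1 : ∀ n : ℕ, ∫⁻ x, ENNReal.ofReal ((S (n^2) x / ((n:ℝ)^2))^2) ∂μ
      ≤ ENNReal.ofReal (B^2 * (1/(n:ℝ))^2) := by
    intro n
    rw [← ofReal_integral_eq_lintegral_ofReal (hg1int n)
      (Eventually.of_forall fun x => sq_nonneg _)]
    apply ENNReal.ofReal_le_ofReal
    have h1 : ∫ x, (S (n^2) x / ((n:ℝ)^2))^2 ∂μ = (∫ x, (S (n^2) x)^2 ∂μ) / ((n:ℝ)^2)^2 := by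
      simp_rw [div_pow]; exact integral_div _ _
    rw [h1]
    have h2 : ∫ x, (S (n^2) x)^2 ∂μ ≤ ((n:ℝ)^2) * B^2 := by
      have := hint (Finset.Icc 1 (n^2))
      rw [Nat.card_Icc] at this
      simpa using this
    rcases Nat.eq_zero_or_pos n with hn | hn
    · subst hn; simp
    · have hn' : (0:ℝ) < (n:ℝ) := by exact_mod_cast hn
      rw [div_le_iff₀ (by positivity)]
      calc ∫ x, (S (n^2) x)^2 ∂μ ≤ ((n:ℝ)^2) * B^2 := h2
        _ = B^2 * (1/(n:ℝ))^2 * ((n:ℝ)^2)^2 := by field_simp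
  have hae1 : ∀ᵐ x ∂μ, Tendsto (fun n : ℕ => (S (n^2) x / ((n:ℝ)^2))^2) atTop (nhds 0) := by
    apply raj_ae_tendsto_zero (fun n x => sq_nonneg _)
      (fun n => ((hSmem' (n^2)).aestronglyMeasurable.aemeasurable.div_const _).pow_const 2)
    exact raj_tsum_ne_top (by positivity) hb1
  -- second sequence
  have hTint : ∀ n : ℕ,
      Integrable (fun x => ∑ m ∈ Finset.Ico (n^2) ((n+1)^2), (S m x - S (n^2) x)^2) μ :=
    fun n => integrable_finset_sum _ fun m _ => hdiffsq (n^2) m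
  have hg2int : ∀ n : ℕ, Integrable
      (fun x => (∑ m ∈ Finset.Ico (n^2) ((n+1)^2), (S m x - S (n^2) x)^2) / (n:ℝ)^4) μ :=
    fun n => (hTint n).div_const _
  have hb2 : ∀ n : ℕ, ∫⁻ x, ENNReal.ofReal
      ((∑ m ∈ Finset.Ico (n^2) ((n+1)^2), (S m x - S (n^2) x)^2) / (n:ℝ)^4) ∂μ
      ≤ ENNReal.ofReal ((9 * B^2) * (1/(n:ℝ))^2) := by
    intro n
    rw [← ofReal_integral_eq_lintegral_ofReal (hg2int n)
      (Eventually.of_forall fun x => by positivity)]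
    apply ENNReal.ofReal_le_ofReal
    rw [integral_div, integral_finset_sum _ fun m _ => hdiffsq (n^2) m]
    have h2 : ∑ m ∈ Finset.Ico (n^2) ((n+1)^2), ∫ x, (S m x - S (n^2) x)^2 ∂μ
        ≤ ((2*n+1 : ℕ) : ℝ) * (((2*n+1 : ℕ) : ℝ) * B^2) := by
      have hcard : (Finset.Ico (n^2) ((n+1)^2)).card = 2*n+1 := by
        rw [Nat.card_Ico]; ring_nf; omega
      calc ∑ m ∈ Finset.Ico (n^2) ((n+1)^2), ∫ x, (S m x - S (n^2) x)^2 ∂μ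
          ≤ ∑ m ∈ Finset.Ico (n^2) ((n+1)^2), ((2*n+1 : ℕ) : ℝ) * B^2 := by
            apply Finset.sum_le_sum
            intro m hm
            rw [Finset.mem_Ico] at hm
            refine (hdiffbd (n^2) m hm.1).trans ?_
            have : m - n^2 ≤ 2*n+1 := Nat.sub_le_iff_le_add.mpr (by nlinarith [hm.2])
            exact mul_le_mul_of_nonneg_right (by exact_mod_cast this) (sq_nonneg B)
        _ = ((2*n+1 : ℕ) : ℝ) * (((2*n+1 : ℕ) : ℝ) * B^2) := by
            rw [Finset.sum_const, hcard, nsmul_eq_mul]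
    rcases Nat.eq_zero_or_pos n with hn | hn
    · subst hn
      simp
    · have hn' : (1:ℝ) ≤ (n:ℝ) := by exact_mod_cast hn
      have hnpos : (0:ℝ) < (n:ℝ) := by linarith
      rw [div_le_iff₀ (by positivity)]
      refine h2.trans ?_
      have e : (9*B^2) * (1/(n:ℝ))^2 * ((n:ℝ))^4 = 9*B^2*(n:ℝ)^2 := by
        field_simp
      rw [e]
      push_cast
      nlinarith [mul_nonneg (sq_nonneg B)
        (by nlinarith [sq_nonneg ((n:ℝ)-1)] : (0:ℝ) ≤ 5*(n:ℝ)^2 - 4*(n:ℝ) - 1)]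
  have hae2 : ∀ᵐ x ∂μ, Tendsto
      (fun n : ℕ => (∑ m ∈ Finset.Ico (n^2) ((n+1)^2), (S m x - S (n^2) x)^2) / (n:ℝ)^4)
      atTop (nhds 0) := by
    apply raj_ae_tendsto_zero (fun n x => by positivity)
      (fun n => (Finset.aemeasurable_fun_sum _ fun m _ =>
        (((hSmem' m).aestronglyMeasurable.aemeasurable.sub
          (hSmem' (n^2)).aestronglyMeasurable.aemeasurable)).pow_const 2).div_const _)
    exact raj_tsum_ne_top (by positivity) hb2
  -- pointwise conclusion
  filter_upwards [hae1, hae2] with x hx1 hx2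
  have hsq : Real.sqrt 0 = 0 := Real.sqrt_zero
  have hsqrt1 : Tendsto (fun n : ℕ => Real.sqrt ((S (n^2) x / ((n:ℝ)^2))^2)) atTop (nhds 0) := by
    have := (Real.continuous_sqrt.tendsto 0).comp hx1
    simpa [Function.comp_def] using this
  have hsqrt2 : Tendsto (fun n : ℕ => Real.sqrt
      ((∑ m ∈ Finset.Ico (n^2) ((n+1)^2), (S m x - S (n^2) x)^2) / (n:ℝ)^4)) atTop (nhds 0) := by
    have := (Real.continuous_sqrt.tendsto 0).comp hx2
    simpa [Function.comp_def] using this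
  have ha : Tendsto (fun n : ℕ => Real.sqrt ((S (n^2) x / ((n:ℝ)^2))^2) + Real.sqrt
      ((∑ m ∈ Finset.Ico (n^2) ((n+1)^2), (S m x - S (n^2) x)^2) / (n:ℝ)^4))
      atTop (nhds 0) := by
    simpa using hsqrt1.add hsqrt2
  have hns : Tendsto Nat.sqrt atTop atTop :=
    tendsto_atTop_atTop.mpr fun b => ⟨b*b, fun m hm => Nat.le_sqrt.mpr hm⟩
  apply squeeze_zero_norm' ?_ (ha.comp hns)
  filter_upwards [eventually_ge_atTop 1] with m hm
  set n := Nat.sqrt m with hn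
  have hn1 : 1 ≤ n := Nat.le_sqrt.mpr (by simpa using hm)
  have hn2 : n^2 ≤ m := Nat.sqrt_le' m
  have hn3 : m < (n+1)^2 := Nat.lt_succ_sqrt' m
  have hnR : (1:ℝ) ≤ (n:ℝ) := by exact_mod_cast hn1
  have hmR : ((n:ℝ)^2) ≤ (m:ℝ) := by exact_mod_cast hn2
  have hmpos : (0:ℝ) < (m:ℝ) := by
    have : (1:ℝ) ≤ (m:ℝ) := by exact_mod_cast hm
    linarith
  have hT : (S m x - S (n^2) x)^2 ≤ ∑ m' ∈ Finset.Ico (n^2) ((n+1)^2), (S m' x - S (n^2) x)^2 :=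
    Finset.single_le_sum (f := fun m' => (S m' x - S (n^2) x)^2)
      (fun i _ => sq_nonneg _) (Finset.mem_Ico.mpr ⟨hn2, hn3⟩)
  have hTnn : (0:ℝ) ≤ ∑ m' ∈ Finset.Ico (n^2) ((n+1)^2), (S m' x - S (n^2) x)^2 :=
    Finset.sum_nonneg fun i _ => sq_nonneg _
  calc ‖(1/(m:ℝ)) * S m x‖ = |S m x| / (m:ℝ) := by
        rw [Real.norm_eq_abs, abs_mul, abs_of_nonneg (by positivity : (0:ℝ) ≤ 1/(m:ℝ))]
        ring
    _ ≤ (|S (n^2) x| + |S m x - S (n^2) x|) / (m:ℝ) := by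
        gcongr
        calc |S m x| = |S (n^2) x + (S m x - S (n^2) x)| := by congr 1; ring
          _ ≤ _ := abs_add_le _ _
    _ ≤ (|S (n^2) x| + |S m x - S (n^2) x|) / ((n:ℝ)^2) :=
        div_le_div_of_nonneg_left (by positivity) (by positivity) hmR
    _ ≤ (|S (n^2) x| + Real.sqrt (∑ m' ∈ Finset.Ico (n^2) ((n+1)^2),
          (S m' x - S (n^2) x)^2)) / ((n:ℝ)^2) := by
        gcongr
        calc |S m x - S (n^2) x| = Real.sqrt ((S m x - S (n^2) x)^2) :=
              (Real.sqrt_sq_eq_abs _).symm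
          _ ≤ _ := Real.sqrt_le_sqrt hT
    _ = Real.sqrt ((S (n^2) x / ((n:ℝ)^2))^2) + Real.sqrt
          ((∑ m' ∈ Finset.Ico (n^2) ((n+1)^2), (S m' x - S (n^2) x)^2) / (n:ℝ)^4) := by
        rw [add_div]
        congr 1
        · rw [Real.sqrt_sq_eq_abs, abs_div, abs_of_nonneg (by positivity : (0:ℝ) ≤ (n:ℝ)^2)]
        · rw [show ((n:ℝ)^4) = ((n:ℝ)^2)^2 by ring, Real.sqrt_div hTnn,
            Real.sqrt_sq (by positivity : (0:ℝ) ≤ (n:ℝ)^2)]
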